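/- Let r ≥ 1 and let π be a noncrossing partition of {1,...,2r} all of whose blocks have even cardinality. Then π ∨ 1̂₂ʳ = 1̂_{2r} in NC(2r) if and only if π ≥ ν₀ᵣ, where ν₀ᵣ is the pair partition {(2r,1),(2,3),(4,5),...,(2r-2,2r-1)}. Moreover the set of such π forms a lattice isomorphic to NC(r). -/
import Mathlib


open Finset

def IsNoncrossing {s : Finset ℕ} (P : Finpartition s) : Prop :=
  ∀ B ∈ P.parts, ∀ B' ∈ P.parts, B ≠ B' →
    ¬ ∃ i j k l : ℕ, i ∈ B ∧ k ∈ B ∧ j ∈ B' ∧ l ∈ B' ∧ i < j ∧ j < k ∧ k < l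

/-- The join of `P` with the standard pair partition `{(1,2),…,(2r-1,2r)}` is the
one-block partition. -/
def JoinWithBracesIsTop (r : ℕ) (P : Finpartition (Finset.Icc 1 (2 * r))) : Prop :=
  ∀ a ∈ Finset.Icc 1 (2 * r), ∀ b ∈ Finset.Icc 1 (2 * r),
    Relation.EqvGen
      (fun x y => (∃ B ∈ P.parts, x ∈ B ∧ y ∈ B) ∨
        (∃ k : ℕ, 1 ≤ k ∧ k ≤ r ∧
          ((x = 2 * k - 1 ∧ y = 2 * k) ∨ (x = 2 * k ∧ y = 2 * k - 1)))) a b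

/-- `ν₀ᵣ ≤ P`: the pair partition `{(2r,1),(2,3),(4,5),…,(2r-2,2r-1)}` refines `P`. -/
def NuLe (r : ℕ) (P : Finpartition (Finset.Icc 1 (2 * r))) : Prop :=
  (∃ B ∈ P.parts, 1 ∈ B ∧ 2 * r ∈ B) ∧
  ∀ i : ℕ, 1 ≤ i → i ≤ r - 1 → ∃ B ∈ P.parts, 2 * i ∈ B ∧ 2 * i + 1 ∈ B

namespace NCproof


/-- label map: x ∈ [1,2r] ↦ [1,r]; odd 2i-1 ↦ i, even 2i (i<r) ↦ i+1, 2r ↦ 1. -/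
def lab (r x : ℕ) : ℕ := if x = 2*r then 1 else x/2 + 1

lemma lab_mem {r x : ℕ} (hr : 1 ≤ r) (hx : x ∈ Icc 1 (2*r)) : lab r x ∈ Icc 1 r := by
  simp only [mem_Icc] at *; unfold lab; split <;> omega

lemma lab_odd {r i : ℕ} (h1 : 1 ≤ i) (h2 : i ≤ r) : lab r (2*i-1) = i := by
  unfold lab; split <;> omega

lemma lab_even {r i : ℕ} (h1 : 1 ≤ i) (h2 : i ≤ r-1) : lab r (2*i) = i+1 := by
  unfold lab; split <;> omega

lemma lab_top {r : ℕ} (hr : 1 ≤ r) : lab r (2*r) = 1 := by unfold lab; simp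

lemma lab_mono {r x y : ℕ} (hxy : x ≤ y) (hy : y < 2*r) : lab r x ≤ lab r y := by
  unfold lab; split <;> split <;> omega

lemma lab_odd_inv {r x : ℕ} (hx : x ∈ Icc 1 (2*r)) (hodd : x % 2 = 1) :
    2 * lab r x - 1 = x := by
  simp only [mem_Icc] at hx; unfold lab; split <;> omega

/-- blow-up of a subset of [1,r] to a subset of [1,2r]. -/
def blowC (r : ℕ) (C : Finset ℕ) : Finset ℕ :=
  (Icc 1 (2*r)).filter (fun x => lab r x ∈ C)

lemma mem_blowC {r : ℕ} {C : Finset ℕ} {x : ℕ} :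
    x ∈ blowC r C ↔ x ∈ Icc 1 (2*r) ∧ lab r x ∈ C := by simp [blowC]

lemma odd_mem_blowC {r : ℕ} {C : Finset ℕ} {i : ℕ} (h1 : 1 ≤ i) (h2 : i ≤ r)
    (hi : i ∈ C) : 2*i-1 ∈ blowC r C := by
  rw [mem_blowC, lab_odd h1 h2]; exact ⟨by simp only [mem_Icc]; omega, hi⟩

lemma blowC_mono {r : ℕ} {C D : Finset ℕ} (h : C ⊆ D) : blowC r C ⊆ blowC r D := by
  intro x hx; rw [mem_blowC] at *; exact ⟨hx.1, h hx.2⟩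

section Blowup
variable {r : ℕ}

/-- The blow-up finpartition of `Icc 1 (2r)` from a finpartition of `Icc 1 r`. -/
def blowup (hr : 1 ≤ r) (σ : Finpartition (Icc 1 r)) : Finpartition (Icc 1 (2*r)) where
  parts := σ.parts.image (blowC r)
  supIndep := by
    rw [Finset.supIndep_iff_pairwiseDisjoint]
    intro u hu v hv huv
    simp only [coe_image, Set.mem_image, mem_coe] at hu hv
    obtain ⟨C, hC, rfl⟩ := hu
    obtain ⟨D, hD, rfl⟩ := hv
    simp only [Function.onFun, id, Finset.disjoint_left]
    intro x hx hx'
    rw [mem_blowC] at hx hx'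
    exact huv (by rw [σ.eq_of_mem_parts hC hD hx.2 hx'.2])
  sup_parts := by
    apply le_antisymm
    · intro x hx
      rw [Finset.mem_sup] at hx
      obtain ⟨t, ht, hxt⟩ := hx
      obtain ⟨C, _, rfl⟩ := mem_image.1 ht
      exact (mem_blowC.1 hxt).1
    · intro x hx
      rw [Finset.mem_sup]
      have hl : lab r x ∈ Icc 1 r := lab_mem hr hx
      rw [← σ.sup_parts, Finset.mem_sup] at hl
      obtain ⟨C, hC, hxC⟩ := hl
      exact ⟨blowC r C, mem_image_of_mem _ hC, mem_blowC.2 ⟨hx, hxC⟩⟩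
  bot_notMem := by
    intro h
    obtain ⟨C, hC, hCe⟩ := mem_image.1 h
    obtain ⟨i, hi⟩ := σ.nonempty_of_mem_parts hC
    have hir := σ.le hC hi
    rw [mem_Icc] at hir
    have : (2*i-1) ∈ blowC r C := odd_mem_blowC hir.1 hir.2 hi
    rw [hCe] at this
    exact absurd this (notMem_empty _)

lemma mem_blowup_parts {hr : 1 ≤ r} {σ : Finpartition (Icc 1 r)} {u : Finset ℕ} :
    u ∈ (blowup hr σ).parts ↔ ∃ C ∈ σ.parts, blowC r C = u := by
  simp [blowup]

lemma blowup_le_iff {hr : 1 ≤ r} {σ τ : Finpartition (Icc 1 r)} :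
    blowup hr σ ≤ blowup hr τ ↔ σ ≤ τ := by
  constructor
  · intro h C hC
    obtain ⟨c, hc, hsub⟩ := h (mem_blowup_parts.2 ⟨C, hC, rfl⟩)
    obtain ⟨D, hD, rfl⟩ := mem_blowup_parts.1 hc
    refine ⟨D, hD, fun i hi => ?_⟩
    have hir := σ.le hC hi
    rw [mem_Icc] at hir
    have := hsub (odd_mem_blowC hir.1 hir.2 hi)
    rw [mem_blowC, lab_odd hir.1 hir.2] at this
    exact this.2
  · intro h u hu
    obtain ⟨C, hC, rfl⟩ := mem_blowup_parts.1 hu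
    obtain ⟨D, hD, hCD⟩ := h hC
    exact ⟨blowC r D, mem_blowup_parts.2 ⟨D, hD, rfl⟩, blowC_mono hCD⟩

end Blowup

section BlowupProps
variable {r : ℕ}

lemma blowup_noncrossing {hr : 1 ≤ r} {σ : Finpartition (Icc 1 r)}
    (hσ : IsNoncrossing σ) : IsNoncrossing (blowup hr σ) := by
  intro u hu v hv huv
  rintro ⟨x1, x2, x3, x4, h1, h3, h2, h4, h12, h23, h34⟩
  obtain ⟨C, hC, rfl⟩ := mem_blowup_parts.1 hu
  obtain ⟨D, hD, rfl⟩ := mem_blowup_parts.1 hv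
  have hCD : C ≠ D := fun h => huv (by rw [h])
  rw [mem_blowC] at h1 h2 h3 h4
  rw [mem_Icc] at *
  have hdisj : ∀ z : ℕ, z ∈ C → z ∈ D → False := fun z hzC hzD =>
    hCD (σ.eq_of_mem_parts hC hD hzC hzD)
  -- labels
  have hab : lab r x1 ≤ lab r x2 := lab_mono (le_of_lt h12) (by omega)
  have hbc : lab r x2 ≤ lab r x3 := lab_mono (le_of_lt h23) (by omega)
  have hab' : lab r x1 ≠ lab r x2 := fun h => hdisj _ (h ▸ h1.2) h2.2
  have hbc' : lab r x2 ≠ lab r x3 := fun h => hdisj _ h3.2 (h ▸ h2.2)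
  by_cases hx4 : x4 = 2*r
  · -- wrap-around case
    have hd : (1:ℕ) ∈ D := by rw [hx4, lab_top hr] at h4; exact h4.2
    have ha1 : 1 ≤ lab r x1 := by
      have := lab_mem hr (mem_Icc.2 ⟨h1.1.1, h1.1.2⟩); rw [mem_Icc] at this; exact this.1
    have ha1' : lab r x1 ≠ 1 := fun h => hdisj _ (h ▸ h1.2) hd
    exact hσ D hD C hC (Ne.symm hCD)
      ⟨1, lab r x1, lab r x2, lab r x3, hd, h2.2, h1.2, h3.2, by omega, by omega, by omega⟩
  · have hcd : lab r x3 ≤ lab r x4 := lab_mono (le_of_lt h34) (by omega)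
    have hcd' : lab r x3 ≠ lab r x4 := fun h => hdisj _ h3.2 (h ▸ h4.2)
    exact hσ C hC D hD hCD
      ⟨lab r x1, lab r x2, lab r x3, lab r x4, h1.2, h3.2, h2.2, h4.2, by omega, by omega, by omega⟩

lemma blowC_card {hr : 1 ≤ r} {C : Finset ℕ} (hC : C ⊆ Icc 1 r) :
    (blowC r C).card = C.card + C.card := by
  classical
  have hO : (blowC r C).filter (fun x => x % 2 = 1) = C.image (fun i => 2*i-1) := by
    ext x
    simp only [mem_filter, mem_blowC, mem_image, mem_Icc]
    constructor
    · rintro ⟨⟨hx, hl⟩, hodd⟩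
      exact ⟨lab r x, hl, lab_odd_inv (mem_Icc.2 hx) hodd⟩
    · rintro ⟨i, hi, rfl⟩
      have hir := hC hi; rw [mem_Icc] at hir
      refine ⟨⟨by omega, ?_⟩, by omega⟩
      rw [lab_odd hir.1 hir.2]; exact hi
  have hE : (blowC r C).filter (fun x => ¬ x % 2 = 1) =
      C.image (fun i => if i = 1 then 2*r else 2*i-2) := by
    ext x
    simp only [mem_filter, mem_blowC, mem_image, mem_Icc]
    constructor
    · rintro ⟨⟨hx, hl⟩, hev⟩
      refine ⟨lab r x, hl, ?_⟩
      by_cases h2r : x = 2*r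
      · rw [h2r, lab_top hr]; simp
      · have : lab r x = x/2 + 1 := by unfold lab; split <;> omega
        rw [this]; split <;> omega
    · rintro ⟨i, hi, rfl⟩
      have hir := hC hi; rw [mem_Icc] at hir
      split
      · subst_vars
        refine ⟨⟨by omega, ?_⟩, by omega⟩
        rw [lab_top hr]; assumption
      · have h2 : 2 ≤ i := by omega
        have : lab r (2*i-2) = i := by unfold lab; split <;> omega
        exact ⟨⟨by omega, by rw [this]; exact hi⟩, by omega⟩
  have hsplit := Finset.card_filter_add_card_filter_not
    (s := blowC r C) (p := fun x => x % 2 = 1)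
  rw [hO, hE] at hsplit
  rw [← hsplit]
  have c1 : (C.image (fun i => 2*i-1)).card = C.card := by
    apply Finset.card_image_of_injOn
    intro a ha b hb hab
    simp only at hab
    have := hC ha; have := hC hb; rw [mem_Icc] at *; omega
  have c2 : (C.image (fun i => if i = 1 then 2*r else 2*i-2)).card = C.card := by
    apply Finset.card_image_of_injOn
    intro a ha b hb hab
    simp only at hab
    have := hC ha; have := hC hb; rw [mem_Icc] at *
    split at hab <;> split at hab <;> omega
  omega

lemma blowup_even {hr : 1 ≤ r} {σ : Finpartition (Icc 1 r)} :
    ∀ B ∈ (blowup hr σ).parts, Even B.card := by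
  intro B hB
  obtain ⟨C, hC, rfl⟩ := mem_blowup_parts.1 hB
  rw [blowC_card (hr := hr) (σ.le hC)]
  exact ⟨C.card, rfl⟩

lemma blowup_nule {hr : 1 ≤ r} (σ : Finpartition (Icc 1 r)) : NuLe r (blowup hr σ) := by
  constructor
  · have h1 : (1:ℕ) ∈ Icc 1 r := by rw [mem_Icc]; omega
    obtain ⟨C, hC, h1C⟩ := σ.exists_mem h1
    refine ⟨blowC r C, mem_blowup_parts.2 ⟨C, hC, rfl⟩, ?_, ?_⟩
    · have := odd_mem_blowC (r := r) le_rfl hr h1C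
      simpa using this
    · rw [mem_blowC, lab_top hr]
      exact ⟨by rw [mem_Icc]; omega, h1C⟩
  · intro i hi1 hi2
    have h1 : i + 1 ∈ Icc 1 r := by rw [mem_Icc]; omega
    obtain ⟨C, hC, h1C⟩ := σ.exists_mem h1
    refine ⟨blowC r C, mem_blowup_parts.2 ⟨C, hC, rfl⟩, ?_, ?_⟩
    · rw [mem_blowC, lab_even hi1 hi2]
      exact ⟨by rw [mem_Icc]; omega, h1C⟩
    · have := odd_mem_blowC (r := r) (i := i+1) (by omega) (by omega) h1C
      have he : 2*(i+1)-1 = 2*i+1 := by omega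
      rwa [he] at this

end BlowupProps

section Separation
variable {r : ℕ}

/-- Noncrossing closure: if `a,b ∈ B` and `x ∈ B'` lies strictly between them with `B' ≠ B`,
then all of `B'` lies strictly between them. -/
lemma key1 {s : Finset ℕ} {P : Finpartition s} (hnc : IsNoncrossing P)
    {B B' : Finset ℕ} (hB : B ∈ P.parts) (hB' : B' ∈ P.parts) (hne : B' ≠ B)
    {a b x y : ℕ} (ha : a ∈ B) (hb : b ∈ B) (hx : x ∈ B') (hy : y ∈ B')
    (h1 : a < x) (h2 : x < b) : a < y ∧ y < b := by
  have hdisj : Disjoint B' B := P.disjoint hB' hB hne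
  rw [Finset.disjoint_left] at hdisj
  have hya : y ≠ a := fun h => hdisj hy (h ▸ ha)
  have hyb : y ≠ b := fun h => hdisj hy (h ▸ hb)
  constructor
  · by_contra hlt
    exact hnc B' hB' B hB hne ⟨y, a, x, b, hy, hx, ha, hb, by omega, h1, h2⟩
  · by_contra hlt
    exact hnc B hB B' hB' (Ne.symm hne) ⟨a, x, b, y, ha, hb, hx, hy, h1, h2, by omega⟩

/-- A subset of `Icc 1 (2r)` which is a union of parts has even cardinality. -/
lemma even_card_of_closed {P : Finpartition (Icc 1 (2*r))}
    (heven : ∀ B ∈ P.parts, Even B.card) {T : Finset ℕ}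
    (hcl : ∀ x ∈ T, ∃ B ∈ P.parts, x ∈ B ∧ B ⊆ T) : Even T.card := by
  classical
  have hT : T = (P.parts.filter (fun B => B ⊆ T)).biUnion id := by
    ext x
    simp only [mem_biUnion, mem_filter, id]
    constructor
    · intro hx
      obtain ⟨B, hB, hxB, hBT⟩ := hcl x hx
      exact ⟨B, ⟨hB, hBT⟩, hxB⟩
    · rintro ⟨B, ⟨_, hBT⟩, hxB⟩
      exact hBT hxB
  rw [hT, Finset.card_biUnion]
  · rw [even_iff_two_dvd]
    apply Finset.dvd_sum
    intro B hB
    rw [← even_iff_two_dvd]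
    exact heven B (mem_filter.1 hB).1
  · intro B hB B' hB' hne
    exact P.disjoint (mem_filter.1 hB).1 (mem_filter.1 hB').1 hne

/-- Invariance: a set closed under parts and braces blocks `EqvGen` connectivity. -/
lemma sep {P : Finpartition (Icc 1 (2*r))} {S : Finset ℕ}
    (hparts : ∀ B ∈ P.parts, ∀ x ∈ B, x ∈ S → B ⊆ S)
    (hpair : ∀ k : ℕ, 1 ≤ k → k ≤ r → ((2*k-1) ∈ S ↔ 2*k ∈ S))
    {u v : ℕ} (hu : u ∈ S) (hv : v ∉ S) (hu' : u ∈ Icc 1 (2*r)) (hv' : v ∈ Icc 1 (2*r))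
    (htop : JoinWithBracesIsTop r P) : False := by
  have key : ∀ x y : ℕ, Relation.EqvGen
      (fun x y => (∃ B ∈ P.parts, x ∈ B ∧ y ∈ B) ∨
        (∃ k : ℕ, 1 ≤ k ∧ k ≤ r ∧
          ((x = 2 * k - 1 ∧ y = 2 * k) ∨ (x = 2 * k ∧ y = 2 * k - 1)))) x y →
      (x ∈ S ↔ y ∈ S) := by
    intro x y h
    induction h with
    | rel x y hxy =>
      rcases hxy with ⟨B, hB, hxB, hyB⟩ | ⟨k, hk1, hk2, hk⟩
      · exact ⟨fun hx => hparts B hB x hxB hx hyB, fun hy => hparts B hB y hyB hy hxB⟩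
      · rcases hk with ⟨rfl, rfl⟩ | ⟨rfl, rfl⟩
        · exact hpair k hk1 hk2
        · exact (hpair k hk1 hk2).symm
    | refl x => exact Iff.rfl
    | symm x y _ ih => exact ih.symm
    | trans x y z _ _ ih1 ih2 => exact ih1.trans ih2
  exact hv ((key u v (htop u hu' v hv')).1 hu)

end Separation

section PartOne
variable {r : ℕ}

lemma top_imp_nule (hr : 1 ≤ r) {P : Finpartition (Icc 1 (2*r))}
    (hnc : IsNoncrossing P) (heven : ∀ B ∈ P.parts, Even B.card)
    (htop : JoinWithBracesIsTop r P) : NuLe r P := by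
  constructor
  · -- 1 and 2r in the same block
    have h1mem : (1:ℕ) ∈ Icc 1 (2*r) := by rw [mem_Icc]; omega
    obtain ⟨B₁, hB₁, h1B⟩ := P.exists_mem h1mem
    refine ⟨B₁, hB₁, h1B, ?_⟩
    by_contra h2r
    have hne : B₁.Nonempty := ⟨1, h1B⟩
    set m := B₁.max' hne with hm
    have hmB : m ∈ B₁ := B₁.max'_mem hne
    have hle : ∀ z ∈ B₁, z ≤ m := fun z hz => B₁.le_max' z hz
    have hmIcc := P.le hB₁ hmB
    rw [mem_Icc] at hmIcc
    have hm2r : m < 2*r := by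
      have : m ≠ 2*r := fun h => h2r (h ▸ hmB)
      omega
    have hclS : ∀ B ∈ P.parts, ∀ x ∈ B, x ∈ Icc 1 m → B ⊆ Icc 1 m := by
      intro B hB x hxB hxS y hyB
      by_cases hBB : B = B₁
      · subst hBB
        have := P.le hB hyB; rw [mem_Icc] at *
        exact ⟨this.1, hle y hyB⟩
      · rw [mem_Icc] at hxS
        have hdisj : Disjoint B B₁ := P.disjoint hB hB₁ hBB
        rw [Finset.disjoint_left] at hdisj
        have hx1 : x ≠ 1 := fun h => hdisj hxB (h ▸ h1B)
        have hxm : x ≠ m := fun h => hdisj hxB (h ▸ hmB)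
        have := key1 hnc hB₁ hB hBB h1B hmB hxB hyB (by omega) (by omega)
        rw [mem_Icc]; omega
    have hmeven : Even m := by
      have := even_card_of_closed heven (T := Icc 1 m) (fun x hx => by
        rw [mem_Icc] at hx
        have hx2 : x ∈ Icc 1 (2*r) := by rw [mem_Icc]; omega
        obtain ⟨B, hB, hxB⟩ := P.exists_mem hx2
        exact ⟨B, hB, hxB, hclS B hB x hxB (by rw [mem_Icc]; omega)⟩)
      rwa [Nat.card_Icc, Nat.add_sub_cancel] at this
    obtain ⟨t, ht⟩ := hmeven
    exact sep hclS
      (fun k hk1 hk2 => by rw [mem_Icc, mem_Icc]; omega)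
      (u := 1) (v := 2*r)
      (by rw [mem_Icc]; exact ⟨le_refl 1, hle 1 h1B⟩)
      (by rw [mem_Icc]; omega)
      h1mem (by rw [mem_Icc]; omega) htop
  · -- 2i and 2i+1 in the same block
    intro i hi1 hi2
    have h2i : 2*i ∈ Icc 1 (2*r) := by rw [mem_Icc]; omega
    obtain ⟨B, hB, hxB⟩ := P.exists_mem h2i
    refine ⟨B, hB, hxB, ?_⟩
    by_contra hno
    by_cases hex : ∃ z ∈ B, 2*i < z
    · -- some element of B above 2i
      obtain ⟨z, hz, hz2⟩ := hex
      set T0 := B.filter (fun w => 2*i < w) with hT0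
      have hT0ne : T0.Nonempty := ⟨z, mem_filter.2 ⟨hz, hz2⟩⟩
      set b' := T0.min' hT0ne with hb'
      have hb'mem := mem_filter.1 (T0.min'_mem hT0ne)
      have hminB : ∀ w ∈ B, 2*i < w → b' ≤ w := fun w hw hw2 =>
        T0.min'_le w (mem_filter.2 ⟨hw, hw2⟩)
      have hb'1 : 2*i+1 < b' := by
        have h1 : 2*i < b' := hb'mem.2
        have h2 : b' ≠ 2*i+1 := fun h => hno (h ▸ hb'mem.1)
        omega
      have hb'Icc := P.le hB hb'mem.1
      rw [mem_Icc] at hb'Icc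
      have hclS : ∀ B'' ∈ P.parts, ∀ x ∈ B'', x ∈ Ioo (2*i) b' → B'' ⊆ Ioo (2*i) b' := by
        intro B'' hB'' x hxB'' hxS y hyB''
        rw [mem_Ioo] at hxS
        have hne2 : B'' ≠ B := by
          intro h; subst h
          exact absurd (hminB x hxB'' hxS.1) (by omega)
        have := key1 hnc hB hB'' hne2 hxB hb'mem.1 hxB'' hyB'' hxS.1 hxS.2
        rw [mem_Ioo]; exact this
      have hEv : Even (Ioo (2*i) b').card := even_card_of_closed heven (fun x hx => by
        rw [mem_Ioo] at hx
        have hx2 : x ∈ Icc 1 (2*r) := by rw [mem_Icc]; omega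
        obtain ⟨B'', hB'', hxB''⟩ := P.exists_mem hx2
        exact ⟨B'', hB'', hxB'', hclS B'' hB'' x hxB'' (by rw [mem_Ioo]; omega)⟩)
      rw [Nat.card_Ioo] at hEv
      obtain ⟨t, ht⟩ := hEv
      exact sep hclS
        (fun k hk1 hk2 => by rw [mem_Ioo, mem_Ioo]; omega)
        (u := 2*i+1) (v := 2*i)
        (by rw [mem_Ioo]; omega) (by rw [mem_Ioo]; omega)
        (by rw [mem_Icc]; omega) h2i htop
    · -- 2i is the maximum of B
      push_neg at hex
      have hBne : B.Nonempty := ⟨2*i, hxB⟩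
      set a := B.min' hBne with ha
      have haB : a ∈ B := B.min'_mem hBne
      have hamin : ∀ z ∈ B, a ≤ z := fun z hz => B.min'_le z hz
      have ha2i : a ≤ 2*i := hamin _ hxB
      have haIcc := P.le hB haB
      rw [mem_Icc] at haIcc
      have hclS : ∀ B'' ∈ P.parts, ∀ x ∈ B'', x ∈ Icc a (2*i) → B'' ⊆ Icc a (2*i) := by
        intro B'' hB'' x hxB'' hxS y hyB''
        by_cases hBB : B'' = B
        · subst hBB
          rw [mem_Icc]
          exact ⟨hamin y hyB'', hex y hyB''⟩
        · rw [mem_Icc] at hxS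
          have hdisj : Disjoint B'' B := P.disjoint hB'' hB hBB
          rw [Finset.disjoint_left] at hdisj
          have hx1 : x ≠ a := fun h => hdisj hxB'' (h ▸ haB)
          have hxm : x ≠ 2*i := fun h => hdisj hxB'' (h ▸ hxB)
          have := key1 hnc hB hB'' hBB haB hxB hxB'' hyB'' (by omega) (by omega)
          rw [mem_Icc]; omega
      have hEv : Even (Icc a (2*i)).card := even_card_of_closed heven (fun x hx => by
        rw [mem_Icc] at hx
        have hx2 : x ∈ Icc 1 (2*r) := by rw [mem_Icc]; omega
        obtain ⟨B'', hB'', hxB''⟩ := P.exists_mem hx2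
        exact ⟨B'', hB'', hxB'', hclS B'' hB'' x hxB'' (by rw [mem_Icc]; omega)⟩)
      rw [Nat.card_Icc] at hEv
      obtain ⟨t, ht⟩ := hEv
      exact sep hclS
        (fun k hk1 hk2 => by rw [mem_Icc, mem_Icc]; omega)
        (u := 2*i) (v := 2*i+1)
        (by rw [mem_Icc]; omega) (by rw [mem_Icc]; omega)
        h2i (by rw [mem_Icc]; omega) htop

lemma nule_imp_top (hr : 1 ≤ r) {P : Finpartition (Icc 1 (2*r))} (hnu : NuLe r P) :
    JoinWithBracesIsTop r P := by
  intro a ha b hb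
  set rel := fun x y => (∃ B ∈ P.parts, x ∈ B ∧ y ∈ B) ∨
    (∃ k : ℕ, 1 ≤ k ∧ k ≤ r ∧
      ((x = 2 * k - 1 ∧ y = 2 * k) ∨ (x = 2 * k ∧ y = 2 * k - 1))) with hrel
  have step : ∀ n, 1 ≤ n → n < 2*r → rel n (n+1) := by
    intro n h1 h2
    rcases Nat.even_or_odd n with he | ho
    · obtain ⟨j, rfl⟩ := he
      obtain ⟨B, hB, h1B, h2B⟩ := hnu.2 j (by omega) (by omega)
      refine Or.inl ⟨B, hB, ?_, ?_⟩
      · have h' : 2*j = j + j := by omega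
        rwa [h'] at h1B
      · have h' : 2*j + 1 = j + j + 1 := by omega
        rwa [h'] at h2B
    · obtain ⟨j, rfl⟩ := ho
      exact Or.inr ⟨j+1, by omega, by omega, Or.inl ⟨by omega, by omega⟩⟩
  have chain : ∀ n, 1 ≤ n → n ≤ 2*r → Relation.EqvGen rel 1 n := by
    intro n h1 h2
    induction n with
    | zero => omega
    | succ m ih =>
      rcases Nat.eq_or_lt_of_le h1 with h | h
      · rw [← h]; exact Relation.EqvGen.refl 1
      · have hm : 1 ≤ m := by omega
        exact Relation.EqvGen.trans _ _ _ (ih hm (by omega))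
          (Relation.EqvGen.rel _ _ (step m hm (by omega)))
  rw [mem_Icc] at ha hb
  exact Relation.EqvGen.trans _ _ _
    (Relation.EqvGen.symm _ _ (chain a ha.1 ha.2)) (chain b hb.1 hb.2)

end PartOne

section Restrict
variable {r : ℕ}

/-- restriction of a subset of [1,2r] to its odd positions, relabelled in [1,r]. -/
def resC (r : ℕ) (B : Finset ℕ) : Finset ℕ := (Icc 1 r).filter (fun i => 2*i-1 ∈ B)

def restrict (r : ℕ) (P : Finpartition (Icc 1 (2*r))) : Finpartition (Icc 1 r) :=
  Finpartition.ofErase (P.parts.image (resC r))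
    (by
      rw [Finset.supIndep_iff_pairwiseDisjoint]
      intro u hu v hv huv
      simp only [coe_image, Set.mem_image, mem_coe] at hu hv
      obtain ⟨B, hB, rfl⟩ := hu
      obtain ⟨B', hB', rfl⟩ := hv
      simp only [Function.onFun, id, Finset.disjoint_left]
      intro i hi hi'
      rw [resC, mem_filter] at hi hi'
      exact huv (by rw [P.eq_of_mem_parts hB hB' hi.2 hi'.2]))
    (by
      apply le_antisymm
      · intro i hi
        rw [Finset.mem_sup] at hi
        obtain ⟨t, ht, hit⟩ := hi
        obtain ⟨B, _, rfl⟩ := mem_image.1 ht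
        exact (mem_filter.1 hit).1
      · intro i hi
        rw [Finset.mem_sup]
        rw [mem_Icc] at hi
        have h2 : 2*i-1 ∈ Icc 1 (2*r) := by rw [mem_Icc]; omega
        obtain ⟨B, hB, hiB⟩ := P.exists_mem h2
        exact ⟨resC r B, mem_image_of_mem _ hB,
          mem_filter.2 ⟨by rw [mem_Icc]; omega, hiB⟩⟩)

lemma mem_restrict_parts {P : Finpartition (Icc 1 (2*r))} {u : Finset ℕ} :
    u ∈ (restrict r P).parts ↔ u ≠ ∅ ∧ ∃ B ∈ P.parts, resC r B = u := by
  rw [restrict, Finpartition.ofErase_parts, mem_erase, bot_eq_empty, mem_image]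

lemma restrict_noncrossing {P : Finpartition (Icc 1 (2*r))} (hnc : IsNoncrossing P) :
    IsNoncrossing (restrict r P) := by
  intro u hu v hv huv
  rintro ⟨i, j, k, l, hi, hk, hj, hl, hij, hjk, hkl⟩
  obtain ⟨-, B, hB, rfl⟩ := mem_restrict_parts.1 hu
  obtain ⟨-, B', hB', rfl⟩ := mem_restrict_parts.1 hv
  have hBB : B ≠ B' := fun h => huv (by rw [h])
  rw [resC, mem_filter, mem_Icc] at hi hj hk hl
  exact hnc B hB B' hB' hBB
    ⟨2*i-1, 2*j-1, 2*k-1, 2*l-1, hi.2, hk.2, hj.2, hl.2, by omega, by omega, by omega⟩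

/-- under `NuLe`, membership of partners is shared inside parts -/
lemma nule_pair {P : Finpartition (Icc 1 (2*r))} (hnu : NuLe r P)
    {B : Finset ℕ} (hB : B ∈ P.parts) :
    (1 ∈ B ↔ 2*r ∈ B) ∧ ∀ i : ℕ, 1 ≤ i → i ≤ r-1 → (2*i ∈ B ↔ 2*i+1 ∈ B) := by
  constructor
  · obtain ⟨B₀, hB₀, h1, h2⟩ := hnu.1
    constructor
    · intro h; rwa [P.eq_of_mem_parts hB hB₀ h h1]
    · intro h; rwa [P.eq_of_mem_parts hB hB₀ h h2]
  · intro i hi1 hi2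
    obtain ⟨B₀, hB₀, h1, h2⟩ := hnu.2 i hi1 hi2
    constructor
    · intro h; rwa [P.eq_of_mem_parts hB hB₀ h h1]
    · intro h; rwa [P.eq_of_mem_parts hB hB₀ h h2]

lemma mem_iff_lab_mem (hr : 1 ≤ r) {P : Finpartition (Icc 1 (2*r))} (hnu : NuLe r P)
    {B : Finset ℕ} (hB : B ∈ P.parts) {x : ℕ} (hx : x ∈ Icc 1 (2*r)) :
    x ∈ B ↔ 2 * lab r x - 1 ∈ B := by
  have hxI := mem_Icc.1 hx
  rcases Nat.even_or_odd x with he | ho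
  · by_cases h2r : x = 2*r
    · subst h2r
      rw [lab_top hr]
      have h1 : 2*1-1 = 1 := by omega
      rw [h1]
      exact ((nule_pair hnu hB).1).symm
    · obtain ⟨j, rfl⟩ := he
      have hj : j + j = 2 * j := by omega
      rw [hj] at *
      have hlab : lab r (2*j) = j + 1 := lab_even (by omega) (by omega)
      rw [hlab]
      have h2 : 2*(j+1)-1 = 2*j+1 := by omega
      rw [h2]
      exact (nule_pair hnu hB).2 j (by omega) (by omega)
  · obtain ⟨j, rfl⟩ := ho
    have := lab_odd_inv (r := r) hx (by omega)
    rw [this]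

lemma blowC_resC (hr : 1 ≤ r) {P : Finpartition (Icc 1 (2*r))} (hnu : NuLe r P)
    {B : Finset ℕ} (hB : B ∈ P.parts) : blowC r (resC r B) = B := by
  ext x
  rw [mem_blowC, resC, mem_filter]
  constructor
  · rintro ⟨hx, -, hxB⟩
    exact (mem_iff_lab_mem hr hnu hB hx).2 hxB
  · intro hxB
    have hx : x ∈ Icc 1 (2*r) := P.le hB hxB
    exact ⟨hx, lab_mem hr hx, (mem_iff_lab_mem hr hnu hB hx).1 hxB⟩

lemma resC_nonempty (hr : 1 ≤ r) {P : Finpartition (Icc 1 (2*r))} (hnu : NuLe r P)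
    {B : Finset ℕ} (hB : B ∈ P.parts) : resC r B ≠ ∅ := by
  obtain ⟨x, hxB⟩ := P.nonempty_of_mem_parts hB
  have hx : x ∈ Icc 1 (2*r) := P.le hB hxB
  have h1 : lab r x ∈ resC r B := by
    rw [resC, mem_filter]
    exact ⟨lab_mem hr hx, (mem_iff_lab_mem hr hnu hB hx).1 hxB⟩
  exact fun h => by rw [h] at h1; exact absurd h1 (notMem_empty _)

lemma blowup_restrict (hr : 1 ≤ r) {P : Finpartition (Icc 1 (2*r))} (hnu : NuLe r P) :
    blowup hr (restrict r P) = P := by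
  apply Finpartition.ext
  ext u
  rw [mem_blowup_parts]
  constructor
  · rintro ⟨C, hC, rfl⟩
    obtain ⟨-, B, hB, rfl⟩ := mem_restrict_parts.1 hC
    rw [blowC_resC hr hnu hB]
    exact hB
  · intro hu
    exact ⟨resC r u, mem_restrict_parts.2 ⟨resC_nonempty hr hnu hu, u, hu, rfl⟩,
      blowC_resC hr hnu hu⟩

end Restrict

section Iso
variable {r : ℕ}

noncomputable def theIso (hr : 1 ≤ r) :
    {P : Finpartition (Icc 1 r) // IsNoncrossing P} ≃o
    {P : Finpartition (Icc 1 (2 * r)) //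
        IsNoncrossing P ∧ (∀ B ∈ P.parts, Even B.card) ∧ JoinWithBracesIsTop r P} := by
  have hbij : Function.Bijective
      (fun σ : {P : Finpartition (Icc 1 r) // IsNoncrossing P} =>
        (⟨blowup hr σ.1, blowup_noncrossing σ.2, blowup_even,
          nule_imp_top hr (blowup_nule σ.1)⟩ :
          {P : Finpartition (Icc 1 (2 * r)) //
            IsNoncrossing P ∧ (∀ B ∈ P.parts, Even B.card) ∧ JoinWithBracesIsTop r P})) := by
    constructor
    · intro a b hab
      have h : blowup hr a.1 = blowup hr b.1 := congrArg Subtype.val hab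
      apply Subtype.ext
      exact le_antisymm (blowup_le_iff.1 (le_of_eq h)) (blowup_le_iff.1 (ge_of_eq h))
    · rintro ⟨P, hnc, hev, htop⟩
      have hnu := top_imp_nule hr hnc hev htop
      refine ⟨⟨restrict r P, restrict_noncrossing hnc⟩, ?_⟩
      exact Subtype.ext (blowup_restrict hr hnu)
  exact
    { toEquiv := Equiv.ofBijective _ hbij
      map_rel_iff' := by
        intro a b
        show (⟨blowup hr a.1, _⟩ : {P : Finpartition (Icc 1 (2 * r)) // _}) ≤ ⟨blowup hr b.1, _⟩ ↔ a ≤ b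
        rw [Subtype.mk_le_mk]
        exact blowup_le_iff.trans Subtype.coe_le_coe }

end Iso
end NCproof

/-- For even noncrossing partitions `π` of `{1,…,2r}`, `π ∨ 1̂₂ʳ = 1̂₂ᵣ` iff `π ≥ ν₀ᵣ`;
moreover the collection of such partitions is order isomorphic (hence lattice
isomorphic) to `NC(r)`. -/
theorem even_upper_complements_iff_and_iso (r : ℕ) (hr : 1 ≤ r) :
    (∀ P : Finpartition (Finset.Icc 1 (2 * r)), IsNoncrossing P →
      (∀ B ∈ P.parts, Even B.card) → (JoinWithBracesIsTop r P ↔ NuLe r P)) ∧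
    Nonempty
      ({P : Finpartition (Finset.Icc 1 (2 * r)) //
          IsNoncrossing P ∧ (∀ B ∈ P.parts, Even B.card) ∧ JoinWithBracesIsTop r P} ≃o
       {P : Finpartition (Finset.Icc 1 r) // IsNoncrossing P}) := by
  constructor
  · intro P hnc heven
    exact ⟨NCproof.top_imp_nule hr hnc heven, NCproof.nule_imp_top hr⟩
  · exact ⟨(NCproof.theIso hr).symm⟩
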